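/- Let G and G' be Gauss diagrams such that G' is obtained from G by a finite sequence of crossing changes. Then for every nonzero integer k, J_k(G) − J_{−k}(G) = J_k(G') − J_{−k}(G'); in other words, the (anti-)reciprocal part of the writhe polynomial is invariant under crossing changes. -/

import Mathlib

open scoped Classical

/-- A Gauss diagram with `n` chords: the `2n` marked points live on the cyclic group
`ZMod (2*n)` (the oriented circle); each chord `i` is the ordered pair
`(tail i, head i)` of marked points and carries a sign (writhe) `sign i ∈ {+1, -1}`;
all `2n` endpoints are distinct. -/
structure GaussDiagram (n : ℕ) where
  tail : Fin n → ZMod (2 * n)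
  head : Fin n → ZMod (2 * n)
  sign : Fin n → ℤ
  sign_mem : ∀ i, sign i = 1 ∨ sign i = -1
  endpoints_inj : Function.Injective
    (fun p : Fin n × Bool => if p.2 then head p.1 else tail p.1)

namespace GaussDiagram

variable {n : ℕ}

/-- `x` lies on the open arc running in the circle's orientation from `a` to `b`. -/
def arcMem (a b x : ZMod (2 * n)) : Prop :=
  0 < (x - a).val ∧ (x - a).val < (b - a).val

/-- `x` lies on the open oriented arc from the tail to the head of chord `i`. -/
def inArc (G : GaussDiagram n) (i : Fin n) (x : ZMod (2 * n)) : Prop :=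
  arcMem (G.tail i) (G.head i) x

/-- Chords `i` and `j` are linked: exactly one endpoint of `j` lies on the open
oriented arc from the tail to the head of `i`. -/
def linked (G : GaussDiagram n) (i j : Fin n) : Prop :=
  Xor' (G.inArc i (G.tail j)) (G.inArc i (G.head j))

/-- Chord `j` crosses chord `i` from right to left. -/
def crossesRL (G : GaussDiagram n) (i j : Fin n) : Prop :=
  G.linked i j ∧ G.inArc i (G.head j)

/-- Chord `j` crosses chord `i` from left to right. -/
def crossesLR (G : GaussDiagram n) (i j : Fin n) : Prop :=
  G.linked i j ∧ G.inArc i (G.tail j)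

/-- The index of the chord `i`: `Ind(i) = r₊ − r₋ − l₊ + l₋`. -/
noncomputable def ind (G : GaussDiagram n) (i : Fin n) : ℤ :=
  ((Finset.univ.filter fun j => G.crossesRL i j ∧ G.sign j = 1).card : ℤ)
    - ((Finset.univ.filter fun j => G.crossesRL i j ∧ G.sign j = -1).card : ℤ)
    - ((Finset.univ.filter fun j => G.crossesLR i j ∧ G.sign j = 1).card : ℤ)
    + ((Finset.univ.filter fun j => G.crossesLR i j ∧ G.sign j = -1).card : ℤ)

/-- The `k`-th writhe `J_k(G)`: the number of positive chords of index `k` minus the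
number of negative chords of index `k`. -/
noncomputable def J (G : GaussDiagram n) (k : ℤ) : ℤ :=
  ((Finset.univ.filter fun i => G.ind i = k ∧ G.sign i = 1).card : ℤ)
    - ((Finset.univ.filter fun i => G.ind i = k ∧ G.sign i = -1).card : ℤ)

/-- The writhe polynomial `W_G(t) = ∑_{Ind(c) ≠ 0} w(c) t^{Ind(c)} = ∑_{k ≠ 0} J_k(G) t^k`. -/
noncomputable def writhePoly (G : GaussDiagram n) : LaurentPolynomial ℤ :=
  ∑ i ∈ Finset.univ.filter (fun i => G.ind i ≠ 0),
    LaurentPolynomial.C (G.sign i) * LaurentPolynomial.T (G.ind i)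

/-- The odd writhe `J(G) = ∑_{c ∈ Odd(G)} w(c)`. -/
noncomputable def oddWrithe (G : GaussDiagram n) : ℤ :=
  ∑ i ∈ Finset.univ.filter (fun i => Odd (G.ind i)), G.sign i

/-- `G'` is obtained from `G` by a crossing change at the chord `c`: the tail and head
of `c` are interchanged and its sign is negated, all other chords being unchanged. -/
def IsCrossingChangeAt (G G' : GaussDiagram n) (c : Fin n) : Prop :=
  G'.tail c = G.head c ∧ G'.head c = G.tail c ∧ G'.sign c = -G.sign c ∧
    ∀ j : Fin n, j ≠ c →
      G'.tail j = G.tail j ∧ G'.head j = G.head j ∧ G'.sign j = G.sign j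

/-- `G'` is obtained from `G` by a crossing change (at some chord). -/
def IsCrossingChange (G G' : GaussDiagram n) : Prop :=
  ∃ c, IsCrossingChangeAt G G' c

/-- `G'` is obtained from `G` by a sequence of `m` crossing changes. -/
def ChangedBy (m : ℕ) (G G' : GaussDiagram n) : Prop :=
  ∃ f : ℕ → GaussDiagram n, f 0 = G ∧ f m = G' ∧
    ∀ i < m, IsCrossingChange (f i) (f (i + 1))

end GaussDiagram

namespace GaussDiagram

variable {n : ℕ}

lemma ep_ne (G : GaussDiagram n) {p q : Fin n × Bool} (h : p ≠ q) :
    (if p.2 then G.head p.1 else G.tail p.1) ≠ (if q.2 then G.head q.1 else G.tail q.1) :=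
  fun he => h (G.endpoints_inj he)

lemma tail_ne_head' (G : GaussDiagram n) (i j : Fin n) : G.tail i ≠ G.head j := by
  have := G.ep_ne (p := (i, false)) (q := (j, true)) (by simp)
  simpa using this

lemma tail_ne_tail' (G : GaussDiagram n) {i j : Fin n} (h : i ≠ j) : G.tail i ≠ G.tail j := by
  have := G.ep_ne (p := (i, false)) (q := (j, false)) (by simp [h])
  simpa using this

lemma head_ne_head' (G : GaussDiagram n) {i j : Fin n} (h : i ≠ j) : G.head i ≠ G.head j := by
  have := G.ep_ne (p := (i, true)) (q := (j, true)) (by simp [h])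
  simpa using this

lemma arcMem_swap (hn : n ≠ 0) {a b x : ZMod (2 * n)} (hab : a ≠ b) (hxa : x ≠ a)
    (hxb : x ≠ b) : arcMem b a x ↔ ¬ arcMem a b x := by
  haveI : NeZero (2 * n) := ⟨by omega⟩
  have hA : (x - a) ≠ 0 := sub_ne_zero.mpr hxa
  have hB : (b - a) ≠ 0 := sub_ne_zero.mpr (Ne.symm hab)
  have hXB : (x - b) ≠ 0 := sub_ne_zero.mpr hxb
  have hA0 : (x - a).val ≠ 0 := fun h0 => hA ((ZMod.val_eq_zero _).mp h0)
  have hB0 : (b - a).val ≠ 0 := fun h0 => hB ((ZMod.val_eq_zero _).mp h0)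
  have hAB : (x - a).val ≠ (b - a).val := by
    intro h0
    exact hXB (by
      have : x - a = b - a := ZMod.val_injective _ h0
      have := sub_eq_sub_iff_sub_eq_sub.mp this
      simpa using this)
  have hAm : (x - a).val < 2 * n := ZMod.val_lt _
  have hBm : (b - a).val < 2 * n := ZMod.val_lt _
  have e2 : (-(b - a)).val = 2 * n - (b - a).val := by
    rw [ZMod.neg_val, if_neg hB]
  have e1 : x - b = (x - a) + (-(b - a)) := by ring
  have e3 : (x - b).val = ((x - a).val + (2 * n - (b - a).val)) % (2 * n) := by
    rw [e1, ZMod.val_add, e2]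
  have e4 : (a - b).val = 2 * n - (b - a).val := by
    have : a - b = -(b - a) := by ring
    rw [this, e2]
  set A := (x - a).val
  set B := (b - a).val
  have hC : (A + (2 * n - B)) % (2 * n) = if B ≤ A then A - B else A + (2 * n - B) := by
    rcases le_or_gt B A with h | h
    · have he : A + (2 * n - B) = 2 * n + (A - B) := by omega
      rw [if_pos h, he, Nat.add_mod_left, Nat.mod_eq_of_lt (by omega)]
    · rw [if_neg (not_le.mpr h), Nat.mod_eq_of_lt (by omega)]
  unfold arcMem
  rw [e3, e4, hC]
  split_ifs <;> omega

lemma not_inArc_tail (G : GaussDiagram n) (i : Fin n) : ¬ G.inArc i (G.tail i) := by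
  intro h
  have := h.1
  simp [sub_self] at this

lemma not_inArc_head (G : GaussDiagram n) (i : Fin n) : ¬ G.inArc i (G.head i) := by
  intro h
  exact absurd h.2 (lt_irrefl _)

lemma not_linked_self (G : GaussDiagram n) (i : Fin n) : ¬ G.linked i i := by
  intro h
  rcases h with ⟨h1, _⟩ | ⟨h1, _⟩
  · exact G.not_inArc_tail i h1
  · exact G.not_inArc_head i h1

lemma ind_eq_sum (G : GaussDiagram n) (i : Fin n) :
    G.ind i = ∑ d : Fin n,
      ((if G.crossesRL i d ∧ G.sign d = 1 then (1 : ℤ) else 0)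
        - (if G.crossesRL i d ∧ G.sign d = -1 then 1 else 0)
        - (if G.crossesLR i d ∧ G.sign d = 1 then 1 else 0)
        + (if G.crossesLR i d ∧ G.sign d = -1 then 1 else 0)) := by
  unfold ind
  rw [Finset.sum_add_distrib, Finset.sum_sub_distrib, Finset.sum_sub_distrib]
  simp only [Finset.card_filter]
  push_cast
  ring

lemma J_eq_sum (G : GaussDiagram n) (k : ℤ) :
    G.J k = ∑ i : Fin n, if G.ind i = k then G.sign i else 0 := by
  unfold J
  rw [Finset.card_filter, Finset.card_filter]
  push_cast
  rw [← Finset.sum_sub_distrib]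
  refine Finset.sum_congr rfl fun i _ => ?_
  rcases G.sign_mem i with hs | hs <;> by_cases hik : G.ind i = k <;> simp [hs, hik]

section Step

variable {G G' : GaussDiagram n} {c : Fin n}

lemma ind_eq_of_ne (h : IsCrossingChangeAt G G' c) {j : Fin n} (hj : j ≠ c) :
    G'.ind j = G.ind j := by
  obtain ⟨htc, hhc, hsc, hrest⟩ := h
  have hinx : ∀ x, G'.inArc j x ↔ G.inArc j x := by
    intro x
    unfold inArc
    rw [(hrest j hj).1, (hrest j hj).2.1]
  rw [ind_eq_sum, ind_eq_sum]
  refine Finset.sum_congr rfl fun d _ => ?_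
  by_cases hd : d = c
  · subst hd
    have h1 : G'.crossesRL j d ↔ G.crossesLR j d := by
      simp only [crossesRL, crossesLR, linked, Xor', xor_def, hinx, htc, hhc]
      tauto
    have h2 : G'.crossesLR j d ↔ G.crossesRL j d := by
      simp only [crossesRL, crossesLR, linked, Xor', xor_def, hinx, htc, hhc]
      tauto
    rcases G.sign_mem d with hs | hs <;>
      simp [h1, h2, hsc, hs] <;> ring
  · have h1 : G'.crossesRL j d ↔ G.crossesRL j d := by
      simp only [crossesRL, linked, Xor', hinx, (hrest d hd).1, (hrest d hd).2.1]
    have h2 : G'.crossesLR j d ↔ G.crossesLR j d := by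
      simp only [crossesLR, linked, Xor', hinx, (hrest d hd).1, (hrest d hd).2.1]
    rw [(hrest d hd).2.2]
    simp [h1, h2]

lemma ind_change (h : IsCrossingChangeAt G G' c) : G'.ind c = -G.ind c := by
  obtain ⟨htc, hhc, hsc, hrest⟩ := h
  have hn : n ≠ 0 := fun h0 => (h0 ▸ c).elim0
  rw [ind_eq_sum, ind_eq_sum, ← Finset.sum_neg_distrib]
  refine Finset.sum_congr rfl fun d _ => ?_
  by_cases hd : d = c
  · subst hd
    simp [crossesRL, crossesLR, not_linked_self]
  · have eT : G'.inArc c (G'.tail d) ↔ ¬ G.inArc c (G.tail d) := by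
      unfold inArc
      rw [(hrest d hd).1, htc, hhc]
      exact arcMem_swap hn (G.tail_ne_head' c c) (G.tail_ne_tail' hd) (G.tail_ne_head' d c)
    have eH : G'.inArc c (G'.head d) ↔ ¬ G.inArc c (G.head d) := by
      unfold inArc
      rw [(hrest d hd).2.1, htc, hhc]
      exact arcMem_swap hn (G.tail_ne_head' c c) (Ne.symm (G.tail_ne_head' c d))
        (G.head_ne_head' hd)
    have hRL : G'.crossesRL c d ↔ G.crossesLR c d := by
      simp only [crossesRL, crossesLR, linked, Xor', xor_def, eT, eH]
      tauto
    have hLR : G'.crossesLR c d ↔ G.crossesRL c d := by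
      simp only [crossesRL, crossesLR, linked, Xor', xor_def, eT, eH]
      tauto
    rw [(hrest d hd).2.2]
    simp only [hRL, hLR]
    ring

lemma J_sub_step (h : IsCrossingChangeAt G G' c) (k : ℤ) :
    G'.J k - G'.J (-k) = G.J k - G.J (-k) := by
  have hsc : G'.sign c = -G.sign c := h.2.2.1
  have hic : G'.ind c = -G.ind c := ind_change h
  rw [J_eq_sum, J_eq_sum, J_eq_sum, J_eq_sum, ← Finset.sum_sub_distrib,
    ← Finset.sum_sub_distrib]
  refine Finset.sum_congr rfl fun i _ => ?_
  by_cases hi : i = c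
  · subst hi
    rw [hsc, hic]
    by_cases h1 : G.ind i = k <;> by_cases h2 : G.ind i = -k <;>
      simp [h1, h2, neg_eq_iff_eq_neg, eq_comm] <;> omega
  · rw [ind_eq_of_ne h hi, (h.2.2.2 i hi).2.2]

end Step

lemma changedBy_J {m : ℕ} : ∀ {G G' : GaussDiagram n}, ChangedBy m G G' →
    ∀ k : ℤ, G.J k - G.J (-k) = G'.J k - G'.J (-k) := by
  induction m with
  | zero =>
    rintro G G' ⟨f, h0, hm, -⟩ k
    rw [← h0, ← hm]
  | succ m ih =>
    rintro G G' ⟨f, h0, hm, hstep⟩ k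
    have hpre : ChangedBy m G (f m) := ⟨f, h0, rfl, fun i hi => hstep i (by omega)⟩
    obtain ⟨c, hc⟩ := hstep m (by omega)
    rw [ih hpre k, ← hm]
    exact (J_sub_step hc k).symm

end GaussDiagram

/-- the quantity `J_k − J_{−k}` is invariant under any finite sequence of
crossing changes, for every nonzero integer `k`. -/
theorem J_sub_J_neg_invariant {n : ℕ} (G G' : GaussDiagram n)
    (h : ∃ m : ℕ, GaussDiagram.ChangedBy m G G') :
    ∀ k : ℤ, k ≠ 0 → G.J k - G.J (-k) = G'.J k - G'.J (-k) := by
  obtain ⟨m, hm⟩ := h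
  intro k _
  exact GaussDiagram.changedBy_J hm k
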